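/- Let B ∈ L(H,K) have closed range, A ∈ L(K)⁺ with (A, R(B)) compatible, and y ∈ K \ R(B). Then u ∈ H is an A-least squares solution of Bx = y (i.e., ‖Bu − y‖_A ≤ ‖Bx − y‖_A for all x) if and only if there exists P ∈ P(A, R(B)) such that Bu = Py. -/

import Mathlib

open ContinuousLinearMap

/-- `P(A,S)`: the set of `A`-Hermitian bounded projections with range `S`. -/
def PAS {K : Type*} [NormedAddCommGroup K] [InnerProductSpace ℂ K] [CompleteSpace K]
    (A : K →L[ℂ] K) (S : Submodule ℂ K) : Set (K →L[ℂ] K) :=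
  {P | P ∘L P = P ∧ LinearMap.range (P : K →ₗ[ℂ] K) = S ∧ A ∘L P = adjoint P ∘L A}

section Aux

variable {K : Type*} [NormedAddCommGroup K] [InnerProductSpace ℂ K] [CompleteSpace K]

private lemma quad_zero {r q : ℝ} (hq : 0 ≤ q) (h : ∀ t : ℝ, 0 ≤ 2 * t * r + t ^ 2 * q) :
    r = 0 := by
  have hq1 : (0 : ℝ) < q + 1 := by linarith
  have h1 := h (-(r / (q + 1)))
  have h2 : 0 ≤ (2 * (-(r / (q + 1))) * r + (-(r / (q + 1))) ^ 2 * q) * (q + 1) ^ 2 :=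
    mul_nonneg h1 (sq_nonneg _)
  have h3 : (2 * (-(r / (q + 1))) * r + (-(r / (q + 1))) ^ 2 * q) * (q + 1) ^ 2
      = -(r ^ 2 * (q + 2)) := by
    field_simp
    ring
  rw [h3] at h2
  have h4 : r ^ 2 = 0 := le_antisymm (by nlinarith) (sq_nonneg r)
  exact sq_eq_zero_iff.mp h4

private lemma sa_inner {A : K →L[ℂ] K} (hA : IsSelfAdjoint A) (v w : K) :
    (inner ℂ (A v) w : ℂ) = inner ℂ v (A w) := by
  calc (inner ℂ (A v) w : ℂ) = inner ℂ (adjoint A v) w := by rw [hA.adjoint_eq]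
    _ = inner ℂ v (A w) := adjoint_inner_left A w v

private lemma cnull {a : ℂ} {q : ℝ} (hq : 0 ≤ q)
    (h : ∀ c : ℂ, 0 ≤ 2 * (c * a).re + Complex.normSq c * q) : a = 0 := by
  have hre : a.re = 0 := by
    refine quad_zero hq fun t => ?_
    have hb := h (t : ℂ)
    simp only [Complex.normSq_ofReal] at hb
    have h1 : ((t : ℂ) * a).re = t * a.re := by simp
    rw [h1] at hb
    nlinarith [hb]
  have him : -a.im = 0 := by
    refine quad_zero hq fun t => ?_
    have hb := h ((t : ℂ) * Complex.I)
    have h1 : ((t : ℂ) * Complex.I * a).re = t * (-a.im) := by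
      simp [Complex.mul_re]
    have h2 : Complex.normSq ((t : ℂ) * Complex.I) = t ^ 2 := by
      simp [Complex.normSq_mul, Complex.normSq_ofReal]; ring
    rw [h1, h2] at hb
    nlinarith [hb]
  have him' : a.im = 0 := by linarith
  apply Complex.ext <;> simp [hre, him']

private lemma expand_aux {A : K →L[ℂ] K} (hA : A.IsPositive) (v w : K) (c : ℂ) :
    (inner ℂ (A (v + c • w)) (v + c • w) : ℂ)
      = inner ℂ (A v) v + (c * inner ℂ (A v) w + (starRingEnd ℂ) (c * inner ℂ (A v) w))
        + (starRingEnd ℂ) c * c * inner ℂ (A w) w := by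
  have hwv : (inner ℂ (A w) v : ℂ) = (starRingEnd ℂ) (inner ℂ (A v) w : ℂ) := by
    rw [sa_inner hA.isSelfAdjoint w v, ← inner_conj_symm]
  simp only [map_add, map_smul, inner_add_left, inner_add_right, inner_smul_left,
    inner_smul_right, hwv, map_mul]
  ring

private lemma re_expand_aux {A : K →L[ℂ] K} (hA : A.IsPositive) (v w : K) (c : ℂ) :
    (inner ℂ (A (v + c • w)) (v + c • w) : ℂ).re
      = (inner ℂ (A v) v : ℂ).re + (2 * (c * inner ℂ (A v) w).re
        + Complex.normSq c * (inner ℂ (A w) w : ℂ).re) := by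
  rw [expand_aux hA v w c]
  have h1 : ((starRingEnd ℂ) c * c : ℂ) = (Complex.normSq c : ℂ) := by
    rw [mul_comm, Complex.mul_conj]
  rw [h1]
  simp only [Complex.add_re, Complex.conj_re, Complex.re_ofReal_mul]
  ring

/-- A positive operator with `⟪Az, z⟫ = 0` kills `z`. -/
private lemma pos_null {A : K →L[ℂ] K} (hA : A.IsPositive) {z : K}
    (hz : (inner ℂ (A z) z : ℂ) = 0) : A z = 0 := by
  have key : ∀ w : K, (inner ℂ (A z) w : ℂ) = 0 := by
    intro w
    refine cnull (q := (inner ℂ (A w) w : ℂ).re) (Complex.nonneg_iff.mp (hA.inner_nonneg_left w)).1 fun c => ?_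
    have h0 : 0 ≤ (inner ℂ (A (z + c • w)) (z + c • w) : ℂ).re := (Complex.nonneg_iff.mp (hA.inner_nonneg_left _)).1
    rw [re_expand_aux hA z w c, hz] at h0
    simpa using h0
  have := key (A z)
  rwa [inner_self_eq_zero] at this

private lemma idem_fix {P : K →L[ℂ] K} (hP : P ∘L P = P) {v : K}
    (hv : v ∈ LinearMap.range (P : K →ₗ[ℂ] K)) : P v = v := by
  obtain ⟨t, rfl⟩ := hv
  calc P (P t) = (P ∘L P) t := rfl
    _ = P t := by rw [hP]

end Aux

section MinIff

variable {H K : Type*}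
  [NormedAddCommGroup H] [InnerProductSpace ℂ H] [CompleteSpace H]
  [NormedAddCommGroup K] [InnerProductSpace ℂ K] [CompleteSpace K]

private lemma min_iff_orth (B : H →L[ℂ] K) (A : K →L[ℂ] K) (hA : A.IsPositive)
    (y : K) (u : H) :
    (∀ x : H,
        (inner ℂ (A (B u - y)) (B u - y) : ℂ).re ≤ (inner ℂ (A (B x - y)) (B x - y) : ℂ).re) ↔
    (∀ h : H, (inner ℂ (A (B u - y)) (B h) : ℂ) = 0) := by
  constructor
  · intro hmin h
    refine cnull (q := (inner ℂ (A (B h)) (B h) : ℂ).re) (Complex.nonneg_iff.mp (hA.inner_nonneg_left (B h))).1 fun c => ?_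
    have hx := hmin (u + c • h)
    have he : B (u + c • h) - y = (B u - y) + c • (B h) := by
      rw [map_add, map_smul]; abel
    rw [he, re_expand_aux hA (B u - y) (B h) c] at hx
    linarith
  · intro horth x
    have he : B x - y = (B u - y) + (1 : ℂ) • (B (x - u)) := by
      rw [one_smul, map_sub]; abel
    rw [he, re_expand_aux hA (B u - y) (B (x - u)) 1]
    have h1 : (inner ℂ (A (B u - y)) (B (x - u)) : ℂ) = 0 := horth (x - u)
    rw [h1]
    simp only [mul_zero, Complex.zero_re, Complex.normSq_one, one_mul, add_zero]
    have hpos : 0 ≤ (inner ℂ (A (B (x - u))) (B (x - u)) : ℂ).re := (Complex.nonneg_iff.mp (hA.inner_nonneg_left _)).1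
    linarith

end MinIff

theorem stmt_15
    {H K : Type*}
    [NormedAddCommGroup H] [InnerProductSpace ℂ H] [CompleteSpace H]
    [NormedAddCommGroup K] [InnerProductSpace ℂ K] [CompleteSpace K]
    (B : H →L[ℂ] K) (hB : IsClosed (LinearMap.range (B : H →ₗ[ℂ] K) : Set K))
    (A : K →L[ℂ] K) (hA : A.IsPositive)
    (hcompat : (PAS A (LinearMap.range (B : H →ₗ[ℂ] K))).Nonempty)
    (y : K) (hy : y ∉ LinearMap.range (B : H →ₗ[ℂ] K)) (u : H) :
    (∀ x : H,
        (inner ℂ (A (B u - y)) (B u - y) : ℂ).re ≤ (inner ℂ (A (B x - y)) (B x - y) : ℂ).re) ↔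
    (∃ P ∈ PAS A (LinearMap.range (B : H →ₗ[ℂ] K)), B u = P y) := by
  set S : Submodule ℂ K := LinearMap.range (B : H →ₗ[ℂ] K) with hS
  constructor
  · -- minimizer → ∃ P
    intro hmin
    have horth : ∀ h : H, (inner ℂ (A (B u - y)) (B h) : ℂ) = 0 :=
      (min_iff_orth B A hA y u).mp hmin
    obtain ⟨P₀, hP₀2, hP₀r, hP₀A⟩ := hcompat
    have hP₀pt : ∀ v, A (P₀ v) = adjoint P₀ (A v) := fun v => by
      have := DFunLike.congr_fun hP₀A v
      simpa using this
    have hP₀fix : ∀ s ∈ S, P₀ s = s := fun s hs => idem_fix hP₀2 (hP₀r ▸ hs)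
    set z : K := B u - P₀ y with hzdef
    have hzS : z ∈ S := by
      refine Submodule.sub_mem _ ⟨u, rfl⟩ ?_
      rw [← hP₀r]; exact ⟨y, rfl⟩
    -- A z is orthogonal to S
    have hAzorth : ∀ s ∈ S, (inner ℂ (A z) s : ℂ) = 0 := by
      rintro _ ⟨h, rfl⟩
      change inner ℂ (A z) (B h) = 0
      have hsplit : A z = A (B u - y) + (A y - A (P₀ y)) := by
        rw [hzdef]
        rw [← map_sub, ← map_add]
        congr 1
        abel
      rw [hsplit, inner_add_left]
      rw [horth h]
      rw [hP₀pt y, inner_sub_left, adjoint_inner_left]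
      rw [hP₀fix (B h) ⟨h, rfl⟩]
      ring
    have hAz : A z = 0 := pos_null hA (hAzorth z hzS)
    -- build the vector c orthogonal to S with ⟪c, y⟫ ≠ 0
    haveI : CompleteSpace S := hB.completeSpace_coe
    set c : K := y - (S.orthogonalProjectionOnto y : K) with hcdef
    have hcorth : ∀ s ∈ S, (inner ℂ c s : ℂ) = 0 := by
      intro s hs
      exact S.starProjection_inner_eq_zero y s hs
    have hc0 : c ≠ 0 := by
      intro hc
      apply hy
      have : y = (S.orthogonalProjectionOnto y : K) := by
        have := sub_eq_zero.mp hc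
        exact this
      rw [this]
      exact (S.orthogonalProjectionOnto y).2
    set d : ℂ := inner ℂ c y with hddef
    have hd : d = inner ℂ c c := by
      have h0 : (inner ℂ c ((S.orthogonalProjectionOnto y : K)) : ℂ) = 0 :=
        hcorth _ (S.orthogonalProjectionOnto y).2
      calc d = inner ℂ c (c + (S.orthogonalProjectionOnto y : K)) := by
            rw [hddef]; congr 1; rw [hcdef]; abel
        _ = inner ℂ c c := by rw [inner_add_right, h0, add_zero]
    have hd0 : d ≠ 0 := by
      rw [hd]
      exact fun h => hc0 (inner_self_eq_zero.mp h)
    -- the projection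
    set P : K →L[ℂ] K := P₀ + d⁻¹ • ((innerSL ℂ c).smulRight z) with hPdef
    have hPapp : ∀ w, P w = P₀ w + (d⁻¹ * inner ℂ c w) • z := by
      intro w
      simp [hPdef, smul_smul]
    have hPmem : ∀ w, P w ∈ S := by
      intro w
      rw [hPapp]
      refine Submodule.add_mem _ ?_ (Submodule.smul_mem _ _ hzS)
      rw [← hP₀r]; exact ⟨w, rfl⟩
    have hPfix : ∀ s ∈ S, P s = s := by
      intro s hs
      rw [hPapp, hP₀fix s hs, hcorth s hs]
      simp
    refine ⟨P, ⟨?_, ?_, ?_⟩, ?_⟩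
    · ext w
      exact (comp_apply P P w).trans (hPfix (P w) (hPmem w))
    · refine le_antisymm ?_ ?_
      · rintro _ ⟨w, rfl⟩; exact hPmem w
      · intro s hs; exact ⟨s, hPfix s hs⟩
    · ext v
      refine ext_inner_right ℂ fun w => ?_
      simp only [comp_apply]
      rw [adjoint_inner_left]
      rw [hPapp v, hPapp w]
      rw [map_add, map_smul, hAz, smul_zero, add_zero]
      rw [hP₀pt v, adjoint_inner_left]
      rw [inner_add_right, inner_smul_right]
      rw [sa_inner hA.isSelfAdjoint v z, hAz, inner_zero_right]
      ring
    · rw [hPapp y, ← hddef, inv_mul_cancel₀ hd0, one_smul, hzdef]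
      abel
  · -- ∃ P → minimizer
    rintro ⟨P, ⟨hP2, hPr, hPA⟩, hBu⟩
    refine (min_iff_orth B A hA y u).mpr fun h => ?_
    have hPpt : A (P y) = adjoint P (A y) := by
      have := DFunLike.congr_fun hPA y
      simpa using this
    have hfix : P (B h) = B h := idem_fix hP2 (hPr ▸ ⟨h, rfl⟩)
    rw [hBu, map_sub, hPpt, inner_sub_left, adjoint_inner_left, hfix]
    ring
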